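/- Let (W, S) be a Coxeter system. Fix w₁ ∈ W and a reflection hyperplane h (i.e., a wall corresponding to a conjugate t of a simple reflection). Assume there exists w₂ ∈ W with w₁ ≤_Pre w₂ (prefix order) such that h separates w₂ from the identity and h is a wall of the chamber of w₂. Let P be the set of elements w ∈ W such that h does not separate 1 from w and w ≤_Pre w₁, ordered by the prefix order. Then P has a unique maximal element. -/

import Mathlib

/-!
STATEMENT 1.  Let `(W, S)` be a Coxeter system, `w₁ ∈ W`, and `t` a reflection
(so the associated wall `h` is the one exchanged by `t`).  Assume there is
`w₂ ∈ W` with `w₁ ≤_Pre w₂` (prefix / left weak order), such that `t` is a left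
inversion of `w₂` (the wall separates `w₂` from `1`) and the wall is a wall of
the chamber of `w₂` (i.e. `t = w₂ s w₂⁻¹` for some simple reflection `s`).
Let `P` be the set of `w ∈ W` such that the wall does not separate `1` from `w`
(`t` is not a left inversion of `w`) and `w ≤_Pre w₁`.  Then `P` has a unique
greatest element for the prefix order.
-/

/-- The prefix (left weak) order on a Coxeter group:
`u ≤_Pre v` iff `ℓ(u) + ℓ(u⁻¹ v) = ℓ(v)`. -/
def CoxeterSystem.lePre {B : Type*} {W : Type*} [Group W] {M : CoxeterMatrix B}
    (cs : CoxeterSystem M W) (u v : W) : Prop :=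
  cs.length u + cs.length (u⁻¹ * v) = cs.length v


namespace CoxAux
open CoxeterSystem List

attribute [local instance] Classical.propDecidable

variable {B W : Type*} [Group W] {M : CoxeterMatrix B} (cs : CoxeterSystem M W)

noncomputable local instance : DecidableEq W := Classical.decEq W

local prefix:100 "σ" => cs.simple
local prefix:100 "π" => cs.wordProd
local prefix:100 "ℓ" => cs.length

lemma zmod2_cases (a : ZMod 2) : a = 0 ∨ a = 1 := by revert a; decide

lemma zmod2_add_self (a : ZMod 2) : a + a = 0 := by revert a; decide

/-- The basic involution of the parity representation. -/
noncomputable def etaFun (i : B) : W × ZMod 2 → W × ZMod 2 :=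
  fun p => (σ i * p.1 * σ i, p.2 + if p.1 = σ i then 1 else 0)

lemma etaFun_invol (i : B) : Function.Involutive (etaFun cs i) := by
  intro p
  have hcond : (σ i * p.1 * σ i = σ i) ↔ (p.1 = σ i) := by
    constructor
    · intro h
      have h2 : p.1 = (σ i)⁻¹ * (σ i * p.1 * σ i) * (σ i)⁻¹ := by group
      rw [h] at h2
      simpa [cs.inv_simple] using h2
    · intro h; rw [h]
      rw [cs.simple_mul_simple_self, one_mul]
  have hfst : σ i * (σ i * p.1 * σ i) * σ i = p.1 := by
    rw [← mul_assoc, ← mul_assoc, cs.simple_mul_simple_self, one_mul,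
      mul_assoc, cs.simple_mul_simple_self, mul_one]
  show (σ i * (σ i * p.1 * σ i) * σ i,
      (p.2 + if p.1 = σ i then 1 else 0) + if σ i * p.1 * σ i = σ i then (1:ZMod 2) else 0) = p
  rw [hfst]
  have hsnd : (p.2 + if p.1 = σ i then (1:ZMod 2) else 0) + (if σ i * p.1 * σ i = σ i then (1:ZMod 2) else 0) = p.2 := by
    rcases em (p.1 = σ i) with h | h
    · rw [if_pos h, if_pos (hcond.mpr h), add_assoc, zmod2_add_self, add_zero]
    · rw [if_neg h, if_neg (fun hc => h (hcond.mp hc)), add_zero, add_zero]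
  rw [hsnd]

noncomputable def eta (i : B) : Equiv.Perm (W × ZMod 2) := (etaFun_invol cs i).toPerm

lemma eta_apply (i : B) (p : W × ZMod 2) :
    eta cs i p = (σ i * p.1 * σ i, p.2 + if p.1 = σ i then 1 else 0) := rfl

/-- product formula over a word. -/
lemma prod_eta_apply (ω : List B) (t : W) (ε : ZMod 2) :
    ((ω.map (eta cs)).prod) (t, ε) =
      (π ω * t * (π ω)⁻¹, ε + ((cs.rightInvSeq ω).count t : ZMod 2)) := by
  induction ω generalizing ε with
  | nil => simp
  | cons i ω ih =>
      have hris : cs.rightInvSeq (i :: ω) =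
          ((π ω)⁻¹ * σ i * π ω) :: cs.rightInvSeq ω := rfl
      have hcond : (π ω * t * (π ω)⁻¹ = σ i) ↔ ((π ω)⁻¹ * σ i * π ω = t) := by
      -- group manipulation
        constructor
        · intro h
          rw [← h]; group
        · intro h
          rw [← h]; group
      simp only [List.map_cons, List.prod_cons, Equiv.Perm.mul_apply, ih, eta_apply,
        cs.wordProd_cons, hris, List.count_cons, beq_iff_eq]
      refine Prod.ext ?_ ?_
      · show σ i * (π ω * t * (π ω)⁻¹) * σ i = (σ i * π ω) * t * (σ i * π ω)⁻¹
        rw [mul_inv_rev, cs.inv_simple]; group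
      · show (ε + ((cs.rightInvSeq ω).count t : ZMod 2)) + _ = ε + _
        have hite : ((if π ω * t * (π ω)⁻¹ = σ i then (1:ZMod 2) else 0))
            = (if (π ω)⁻¹ * σ i * π ω = t then (1:ZMod 2) else 0) := by
          rcases em ((π ω)⁻¹ * σ i * π ω = t) with h | h
          · rw [if_pos h, if_pos (hcond.mpr h)]
          · rw [if_neg h, if_neg (fun hc => h (hcond.mp hc))]
        rw [hite]
        have : (((cs.rightInvSeq ω).count t + if (π ω)⁻¹ * σ i * π ω = t then 1 else 0 : ℕ) : ZMod 2)
            = ((cs.rightInvSeq ω).count t : ZMod 2) + (if (π ω)⁻¹ * σ i * π ω = t then (1:ZMod 2) else 0) := by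
          push_cast
          rcases em ((π ω)⁻¹ * σ i * π ω = t) with h | h <;> simp [h]
        rw [this]; ring

/-- words `[i,j,i,j,...]` of length `2*m`. -/
def rep (i j : B) : ℕ → List B
  | 0 => []
  | (m+1) => i :: j :: rep i j m

lemma prod_rep (i j : B) (m : ℕ) : π (rep i j m) = (σ i * σ j) ^ m := by
  induction m with
  | zero => simp [rep]
  | succ m ih =>
      show π (i :: j :: rep i j m) = _
      rw [cs.wordProd_cons, cs.wordProd_cons, ih, pow_succ']
      group

lemma conj_simple_pow (i j : B) (m : ℕ) :
    σ j * (σ i * σ j) ^ m = (σ j * σ i) ^ m * σ j := by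
  induction m with
  | zero => simp
  | succ m ih =>
      calc σ j * (σ i * σ j) ^ (m+1) = (σ j * σ i) * (σ j * (σ i * σ j) ^ m) := by
            rw [pow_succ']; simp only [mul_assoc]
        _ = (σ j * σ i) * ((σ j * σ i) ^ m * σ j) := by rw [ih]
        _ = (σ j * σ i) ^ (m+1) * σ j := by rw [pow_succ']; simp only [mul_assoc]

lemma ris_rep (i j : B) (m : ℕ) :
    cs.rightInvSeq (rep i j m) =
      ((List.range (2*m)).reverse).map (fun c => (σ j * σ i) ^ c * σ j) := by
  induction m with
  | zero => simp [rep]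
  | succ m ih =>
      have h1 : cs.rightInvSeq (rep i j (m+1)) =
          ((π (j :: rep i j m))⁻¹ * σ i * π (j :: rep i j m)) ::
          (((π (rep i j m))⁻¹ * σ j * π (rep i j m)) :: cs.rightInvSeq (rep i j m)) := rfl
      have hπ : π (rep i j m) = (σ i * σ j) ^ m := prod_rep cs i j m
      have hπinv : (π (rep i j m))⁻¹ = (σ j * σ i) ^ m := by
        rw [hπ, ← inv_pow, mul_inv_rev, cs.inv_simple, cs.inv_simple]
      have hb : (π (rep i j m))⁻¹ * σ j * π (rep i j m) = (σ j * σ i) ^ (2*m) * σ j := by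
        rw [hπinv, hπ, mul_assoc, conj_simple_pow cs, ← mul_assoc, ← pow_add, two_mul]
      have ha : (π (j :: rep i j m))⁻¹ * σ i * π (j :: rep i j m)
          = (σ j * σ i) ^ (2*m+1) * σ j := by
        rw [cs.wordProd_cons, mul_inv_rev, cs.inv_simple, hπinv, hπ]
        calc (σ j * σ i) ^ m * σ j * σ i * (σ j * (σ i * σ j) ^ m)
            = (σ j * σ i) ^ m * (σ j * σ i) * (σ j * (σ i * σ j) ^ m) := by
              simp only [mul_assoc]
          _ = (σ j * σ i) ^ (m+1) * (σ j * (σ i * σ j) ^ m) := by rw [pow_succ]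
          _ = (σ j * σ i) ^ (m+1) * ((σ j * σ i) ^ m * σ j) := by rw [conj_simple_pow cs]
          _ = (σ j * σ i) ^ (2*m+1) * σ j := by
              rw [← mul_assoc, ← pow_add]
              congr 2
              ring
      have hrange : (List.range (2*(m+1))).reverse
          = (2*m+1) :: (2*m) :: (List.range (2*m)).reverse := by
        have h2 : 2*(m+1) = (2*m+1)+1 := by ring
        rw [h2, List.range_succ, List.range_succ]
        simp
      rw [h1, ha, hb, ih, hrange]
      simp

lemma count_ris_rep_even (i j : B) (w : W) :
    ((cs.rightInvSeq (rep i j (M.M i j))).count w : ZMod 2) = 0 := by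
  have hMM : (σ j * σ i) ^ (M.M i j) = 1 := cs.simple_mul_simple_pow' i j
  have h1 : cs.rightInvSeq (rep i j (M.M i j))
      = ((List.range (2*(M.M i j))).map (fun c => (σ j * σ i) ^ c * σ j)).reverse := by
    rw [ris_rep cs, List.map_reverse]
  have h2 : (List.range (2*(M.M i j))).map (fun c => (σ j * σ i) ^ c * σ j)
      = (List.range (M.M i j)).map (fun c => (σ j * σ i) ^ c * σ j)
        ++ (List.range (M.M i j)).map (fun c => (σ j * σ i) ^ c * σ j) := by
    rw [two_mul, List.range_add, List.map_append, List.map_map]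
    congr 1
    apply List.map_congr_left
    intro c _
    simp only [Function.comp_apply]
    rw [pow_add, hMM, one_mul]
  rw [h1, List.count_reverse, h2, List.count_append]
  push_cast
  exact zmod2_add_self _

lemma prod_eta_rep (i j : B) (m : ℕ) :
    (eta cs i * eta cs j) ^ m = (((rep i j m).map (eta cs)).prod) := by
  induction m with
  | zero => simp [rep]
  | succ m ih =>
      rw [pow_succ', ih]
      show _ = ((eta cs i :: eta cs j :: (rep i j m).map (eta cs)).prod)
      rw [List.prod_cons, List.prod_cons, mul_assoc]

lemma eta_liftable : M.IsLiftable (eta cs) := by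
  intro i j
  rw [prod_eta_rep cs i j (M.M i j)]
  ext p : 1
  rw [show p = (p.1, p.2) from rfl, prod_eta_apply cs, prod_rep cs,
    cs.simple_mul_simple_pow, count_ris_rep_even cs]
  simp

/-- The parity representation. -/
noncomputable def phi : W →* Equiv.Perm (W × ZMod 2) := cs.lift ⟨eta cs, eta_liftable cs⟩

lemma phi_simple (i : B) : phi cs (σ i) = eta cs i := cs.lift_apply_simple (eta_liftable cs) i

lemma phi_wordProd (ω : List B) : phi cs (π ω) = ((ω.map (eta cs)).prod) := by
  unfold CoxeterSystem.wordProd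
  rw [map_list_prod, List.map_map]
  congr 1
  apply List.map_congr_left
  intro b _
  exact phi_simple cs b

/-- parity of the number of times the wall of `t` separates `1` from `w` (right version). -/
noncomputable def zeta (w t : W) : ZMod 2 := ((phi cs w) (t, 0)).2

lemma zeta_count (ω : List B) (t : W) :
    zeta cs (π ω) t = ((cs.rightInvSeq ω).count t : ZMod 2) := by
  unfold zeta
  rw [phi_wordProd cs, prod_eta_apply cs]
  simp

lemma phi_apply (w t : W) (ε : ZMod 2) :
    (phi cs w) (t, ε) = (w * t * w⁻¹, ε + zeta cs w t) := by
  obtain ⟨ω, rfl⟩ := cs.wordProd_surjective w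
  rw [phi_wordProd cs, prod_eta_apply cs, zeta_count cs]

lemma zeta_cocycle (x y t : W) :
    zeta cs (x*y) t = zeta cs y t + zeta cs x (y*t*y⁻¹) := by
  unfold zeta
  rw [map_mul, Equiv.Perm.mul_apply, phi_apply cs y t 0, phi_apply cs x (y*t*y⁻¹) (0 + zeta cs y t)]
  simp [zeta, add_comm]

lemma zeta_one (t : W) : zeta cs 1 t = 0 := by
  unfold zeta; simp

lemma zeta_inv_conj (u t : W) : zeta cs u⁻¹ t + zeta cs u (u⁻¹ * t * u) = 0 := by
  have h := zeta_cocycle cs u u⁻¹ t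
  rw [mul_inv_cancel, zeta_one] at h
  rw [inv_inv] at h
  exact h.symm

lemma zeta_simple (i : B) (t : W) :
    zeta cs (σ i) t = if t = σ i then 1 else 0 := by
  unfold zeta
  rw [phi_simple cs, eta_apply]
  simp

lemma zeta_refl {t : W} (ht : cs.IsReflection t) : zeta cs t t = 1 := by
  obtain ⟨u, i, hui⟩ := ht
  have hconj : u⁻¹ * t * u = σ i := by rw [hui]; group
  have h1 : t = u * (σ i * u⁻¹) := by rw [hui]; group
  have h2 : zeta cs t t = zeta cs (σ i * u⁻¹) t + zeta cs u ((σ i * u⁻¹) * t * (σ i * u⁻¹)⁻¹) := by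
    nth_rw 1 [h1]
    rw [zeta_cocycle cs u (σ i * u⁻¹) t]
  have h3 : (σ i * u⁻¹) * t * (σ i * u⁻¹)⁻¹ = σ i := by
    have he : (σ i * u⁻¹) * t * (σ i * u⁻¹)⁻¹ = σ i * (u⁻¹ * t * u) * (σ i)⁻¹ := by group
    rw [he, hconj, cs.inv_simple, cs.simple_mul_simple_cancel_right]
  have h4 : zeta cs (σ i * u⁻¹) t = zeta cs u⁻¹ t + zeta cs (σ i) ((u⁻¹) * t * (u⁻¹)⁻¹) := by
    rw [zeta_cocycle cs (σ i) u⁻¹ t]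
  have h5 : (u⁻¹) * t * (u⁻¹)⁻¹ = σ i := by rw [inv_inv]; exact hconj
  have h6 := zeta_inv_conj cs u t
  rw [hconj] at h6
  rw [h2, h3, h4, h5, zeta_simple cs, if_pos rfl]
  rw [add_assoc, add_comm (1 : ZMod 2) (zeta cs u (σ i)), ← add_assoc, h6, zero_add]

end CoxAux

namespace CoxAux
open CoxeterSystem List

attribute [local instance] Classical.propDecidable

variable {B W : Type*} [Group W] {M : CoxeterMatrix B} (cs : CoxeterSystem M W)

noncomputable local instance : DecidableEq W := Classical.decEq W

local prefix:100 "σ" => cs.simple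
local prefix:100 "π" => cs.wordProd
local prefix:100 "ℓ" => cs.length

/-- The fundamental criterion : `t` is a right inversion of `w` iff `ζ w t = 1`. -/
lemma rinv_iff {t : W} (ht : cs.IsReflection t) (w : W) :
    ℓ (w * t) < ℓ w ↔ zeta cs w t = 1 := by
  constructor
  · intro h
    rcases zmod2_cases (zeta cs w t) with h0 | h1
    · exfalso
      have hwt : zeta cs ((w * t) * t) t = zeta cs t t + zeta cs (w*t) (t * t * t⁻¹) :=
        zeta_cocycle cs (w*t) t t
      rw [ht.mul_self, one_mul, ht.inv] at hwt
      have hwtt : (w * t) * t = w := by rw [mul_assoc, ht.mul_self, mul_one]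
      rw [hwtt, zeta_refl cs ht, h0] at hwt
      have h2 : zeta cs (w * t) t = 1 := by
        rcases zmod2_cases (zeta cs (w*t) t) with h' | h'
        · rw [h'] at hwt; exact absurd hwt.symm (by decide)
        · exact h'
      -- so t is a right inversion of w*t, i.e. ℓ ((w*t)*t) < ℓ (w*t), i.e. ℓ w < ℓ (w*t)
      obtain ⟨ω, hred, hw⟩ := cs.exists_reduced_word' (w * t)
      rw [hw] at h2
      rw [zeta_count cs] at h2
      have hcnt : (cs.rightInvSeq ω).count t ≠ 0 := by
        intro hc; rw [hc] at h2; exact absurd h2.symm (by decide)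
      have hmem : t ∈ cs.rightInvSeq ω := by
        rw [← List.count_pos_iff]
        omega
      have hinv := cs.isRightInversion_of_mem_rightInvSeq hred hmem
      rw [← hw] at hinv
      have : ℓ w < ℓ (w * t) := by
        have := hinv.2
        rw [mul_assoc, ht.mul_self, mul_one] at this
        exact this
      omega
    · exact h1
  · intro h
    obtain ⟨ω, hred, hw⟩ := cs.exists_reduced_word' w
    rw [hw, zeta_count cs] at h
    have hcnt : (cs.rightInvSeq ω).count t ≠ 0 := by
      intro hc; rw [hc] at h; exact absurd h.symm (by decide)
    have hmem : t ∈ cs.rightInvSeq ω := by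
      rw [← List.count_pos_iff]; omega
    have hinv := cs.isRightInversion_of_mem_rightInvSeq hred hmem
    rw [← hw] at hinv
    exact hinv.2

lemma linv_iff {t : W} (ht : cs.IsReflection t) (w : W) :
    ℓ (t * w) < ℓ w ↔ zeta cs w⁻¹ t = 1 := by
  have h1 : ℓ (t * w) = ℓ (w⁻¹ * t) := by
    rw [← cs.length_inv (w⁻¹ * t), mul_inv_rev, inv_inv, ht.inv]
  have h2 : ℓ w = ℓ w⁻¹ := (cs.length_inv w).symm
  rw [h1, h2]
  exact rinv_iff cs ht w⁻¹

/-- Parity splitting of left inversions over a product. -/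
lemma zeta_linv_split (x y t : W) :
    zeta cs (x*y)⁻¹ t = zeta cs x⁻¹ t + zeta cs y⁻¹ (x⁻¹ * t * x) := by
  rw [mul_inv_rev, zeta_cocycle cs y⁻¹ x⁻¹ t, inv_inv]

lemma isReflection_conj_left {t : W} (ht : cs.IsReflection t) (x : W) :
    cs.IsReflection (x⁻¹ * t * x) := by
  have := ht.conj x⁻¹
  rwa [inv_inv] at this

/-- Fact 1 : if `t` separates `1` from `x*y` (lengths need not add), then it separates
`1` from `x` or its `x`-conjugate separates `1` from `y` -- with exact parity. -/
lemma linv_mul_iff {t : W} (ht : cs.IsReflection t) (x y : W) :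
    ℓ (t * (x * y)) < ℓ (x * y) ↔
      ((ℓ (t * x) < ℓ x ∧ ¬ ℓ ((x⁻¹ * t * x) * y) < ℓ y) ∨
       (¬ ℓ (t * x) < ℓ x ∧ ℓ ((x⁻¹ * t * x) * y) < ℓ y)) := by
  have hc := zeta_linv_split cs x y t
  have h1 := linv_iff cs ht (x*y)
  have h2 := linv_iff cs ht x
  have h3 := linv_iff cs (isReflection_conj_left cs ht x) y
  rw [h1, h2, h3, hc]
  rcases zmod2_cases (zeta cs x⁻¹ t) with ha | ha <;>
    rcases zmod2_cases (zeta cs y⁻¹ (x⁻¹ * t * x)) with hb | hb <;>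
    (try rw [ha]) <;> (try rw [hb]) <;> (try decide)

/-- Strong exchange, right version, with erasure. -/
lemma se_right {t : W} (ht : cs.IsReflection t) (ω : List B)
    (h : ℓ (π ω * t) < ℓ (π ω)) :
    ∃ j, j < ω.length ∧ (cs.rightInvSeq ω).getD j 1 = t := by
  have h1 : zeta cs (π ω) t = 1 := (rinv_iff cs ht _).mp h
  rw [zeta_count cs] at h1
  have hcnt : (cs.rightInvSeq ω).count t ≠ 0 := by
    intro hc; rw [hc] at h1; exact absurd h1.symm (by decide)
  have hmem : t ∈ cs.rightInvSeq ω := by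
    rw [← List.count_pos_iff]; omega
  obtain ⟨j, hj, hget⟩ := List.mem_iff_getElem.mp hmem
  refine ⟨j, ?_, ?_⟩
  · rw [cs.length_rightInvSeq] at hj; exact hj
  · rw [List.getD_eq_getElem _ _ hj]; exact hget

lemma se_right_erase {t : W} (ht : cs.IsReflection t) (ω : List B)
    (h : ℓ (π ω * t) < ℓ (π ω)) :
    ∃ j, j < ω.length ∧ π ω * t = π (ω.eraseIdx j) := by
  obtain ⟨j, hj, hget⟩ := se_right cs ht ω h
  refine ⟨j, hj, ?_⟩
  rw [← hget]
  exact cs.wordProd_mul_getD_rightInvSeq ω j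

/-- Strong exchange, left version. -/
lemma se_left {t : W} (ht : cs.IsReflection t) (ω : List B)
    (h : ℓ (t * π ω) < ℓ (π ω)) :
    ∃ j, j < ω.length ∧ (cs.leftInvSeq ω).getD j 1 = t := by
  have h1 : zeta cs (π ω)⁻¹ t = 1 := (linv_iff cs ht _).mp h
  rw [← cs.wordProd_reverse, zeta_count cs] at h1
  have hcnt : (cs.rightInvSeq ω.reverse).count t ≠ 0 := by
    intro hc; rw [hc] at h1; exact absurd h1.symm (by decide)
  have hmem : t ∈ cs.rightInvSeq ω.reverse := by
    rw [← List.count_pos_iff]; omega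
  rw [cs.rightInvSeq_reverse] at hmem
  rw [List.mem_reverse] at hmem
  obtain ⟨j, hj, hget⟩ := List.mem_iff_getElem.mp hmem
  refine ⟨j, ?_, ?_⟩
  · rw [cs.length_leftInvSeq] at hj; exact hj
  · rw [List.getD_eq_getElem _ _ hj]; exact hget

/-- Deletion : a non-reduced word may be shortened by two letters. -/
lemma deletion (ω : List B) (h : ¬ cs.IsReduced ω) :
    ∃ ω' : List B, π ω' = π ω ∧ ω'.length + 2 = ω.length ∧ ∀ e ∈ ω', e ∈ ω := by
  have hex : ∃ n, ¬ cs.IsReduced (ω.take n) := by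
    exact ⟨ω.length, by rwa [List.take_length]⟩
  have hspec' : ¬ cs.IsReduced (ω.take (Nat.find hex)) := Nat.find_spec hex
  have hkpos : Nat.find hex ≠ 0 := by
    intro h0
    rw [h0] at hspec'
    exact hspec' (by simp [CoxeterSystem.IsReduced])
  obtain ⟨q, hfq⟩ : ∃ q, Nat.find hex = q + 1 := ⟨Nat.find hex - 1, by omega⟩
  have hspec : ¬ cs.IsReduced (ω.take (q+1)) := by rwa [hfq] at hspec'
  have hqred : cs.IsReduced (ω.take q) := by
    by_contra hq
    have hle : Nat.find hex ≤ q := Nat.find_le hq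
    omega
  have hqlt : q < ω.length := by
    by_contra hq
    push_neg at hq
    have : ω.take (q+1) = ω.take q := by
      rw [List.take_of_length_le hq, List.take_of_length_le (by omega)]
    rw [this] at hspec
    exact hspec hqred
  -- take (q+1) = take q ++ [ω[q]]
  have htake : ω.take (q+1) = ω.take q ++ [ω[q]'hqlt] := by
    rw [← List.take_concat_get hqlt, List.concat_eq_append]
  set d := ω[q]'hqlt with hd
  have hlen_take : (ω.take q).length = q := by
    rw [List.length_take]; omega
  have hprod : π (ω.take (q+1)) = π (ω.take q) * σ d := by
    rw [htake, cs.wordProd_append, cs.wordProd_singleton]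
  have hdesc : ℓ (π (ω.take q) * σ d) < ℓ (π (ω.take q)) := by
    have hql : ℓ (π (ω.take q)) = q := by
      rw [hqred]; exact hlen_take
    rcases cs.length_mul_simple (π (ω.take q)) d with hc | hc
    · exfalso
      apply hspec
      unfold CoxeterSystem.IsReduced
      rw [hprod, hc, hql, htake]
      simp [hlen_take]
    · omega
  obtain ⟨j, hjq, herase⟩ := se_right_erase cs (cs.isReflection_simple d) (ω.take q) hdesc
  rw [hlen_take] at hjq
  refine ⟨(ω.take q).eraseIdx j ++ ω.drop (q+1), ?_, ?_, ?_⟩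
  · rw [cs.wordProd_append, ← herase, ← hprod, ← cs.wordProd_append,
      List.take_append_drop]
  · have h1 : ((ω.take q).eraseIdx j).length + 1 = (ω.take q).length :=
      List.length_eraseIdx_add_one (by rwa [hlen_take])
    rw [List.length_append, List.length_drop]
    omega
  · intro e he
    rcases List.mem_append.mp he with h1 | h1
    · exact List.mem_of_mem_take (List.mem_of_mem_eraseIdx h1)
    · exact List.mem_of_mem_drop h1

/-- Every word can be replaced by a reduced word with the same product, using only
letters of the original word. -/
lemma to_reduced (ω : List B) :
    ∃ ω' : List B, cs.IsReduced ω' ∧ π ω' = π ω ∧ ∀ e ∈ ω', e ∈ ω := by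
  obtain ⟨n, hn⟩ : ∃ n, ω.length ≤ n := ⟨ω.length, le_refl _⟩
  induction n generalizing ω with
  | zero =>
      have : ω = [] := List.eq_nil_of_length_eq_zero (by omega)
      subst this
      exact ⟨[], by simp [CoxeterSystem.IsReduced], rfl, by simp⟩
  | succ n ih =>
      by_cases hred : cs.IsReduced ω
      · exact ⟨ω, hred, rfl, fun e he => he⟩
      · obtain ⟨ω₁, hπ, hlen, hmem⟩ := deletion cs ω hred
        obtain ⟨ω', h1, h2, h3⟩ := ih ω₁ (by omega)
        exact ⟨ω', h1, h2.trans hπ, fun e he => hmem e (h3 e he)⟩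

end CoxAux

namespace CoxAux
open CoxeterSystem List

attribute [local instance] Classical.propDecidable

variable {B W : Type*} [Group W] {M : CoxeterMatrix B} (cs : CoxeterSystem M W)

noncomputable local instance : DecidableEq W := Classical.decEq W

local prefix:100 "σ" => cs.simple
local prefix:100 "π" => cs.wordProd
local prefix:100 "ℓ" => cs.length

lemma le_refl' (u : W) : cs.lePre u u := by
  unfold CoxeterSystem.lePre
  simp

lemma one_le (u : W) : cs.lePre 1 u := by
  unfold CoxeterSystem.lePre
  simp

lemma le_length {u v : W} (h : cs.lePre u v) : ℓ u ≤ ℓ v := by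
  unfold CoxeterSystem.lePre at h
  omega

lemma le_trans' {u v w : W} (h1 : cs.lePre u v) (h2 : cs.lePre v w) : cs.lePre u w := by
  unfold CoxeterSystem.lePre at *
  have e1 : u⁻¹ * w = (u⁻¹ * v) * (v⁻¹ * w) := by group
  have h3 : ℓ (u⁻¹ * w) ≤ ℓ (u⁻¹ * v) + ℓ (v⁻¹ * w) := by
    rw [e1]; exact cs.length_mul_le _ _
  have e2 : w = u * (u⁻¹ * w) := by group
  have h4 : ℓ w ≤ ℓ u + ℓ (u⁻¹ * w) := by
    nth_rw 1 [e2]; exact cs.length_mul_le _ _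
  omega

lemma le_antisymm' {u v : W} (h1 : cs.lePre u v) (h2 : cs.lePre v u) : u = v := by
  unfold CoxeterSystem.lePre at *
  have h3 : ℓ (u⁻¹ * v) = 0 := by omega
  have h4 : u⁻¹ * v = 1 := cs.length_eq_zero_iff.mp h3
  have h5 : u * (u⁻¹ * v) = u * 1 := by rw [h4]
  rw [← mul_assoc] at h5
  simpa using h5.symm

lemma le_one_iff {u : W} (h : cs.lePre u 1) : u = 1 :=
  le_antisymm' cs h (one_le cs u)

/-- left inversions are monotone along the prefix order. -/
lemma linv_mono {u v t : W} (h : cs.lePre u v) (ht : ℓ (t * u) < ℓ u) :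
    ℓ (t * v) < ℓ v := by
  unfold CoxeterSystem.lePre at h
  have e : t * v = (t * u) * (u⁻¹ * v) := by group
  have h2 : ℓ (t * v) ≤ ℓ (t * u) + ℓ (u⁻¹ * v) := by
    rw [e]; exact cs.length_mul_le _ _
  omega

lemma simple_le {i : B} {w : W} (h : ℓ (σ i * w) < ℓ w) : cs.lePre (σ i) w := by
  unfold CoxeterSystem.lePre
  rw [cs.length_simple, cs.inv_simple]
  rcases cs.length_simple_mul w i with hc | hc <;> omega

/-- quotient by a common left descent. -/
lemma le_quot {i : B} {u v : W} (hu : ℓ (σ i * u) < ℓ u) (hv : ℓ (σ i * v) < ℓ v)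
    (h : cs.lePre u v) : cs.lePre (σ i * u) (σ i * v) := by
  unfold CoxeterSystem.lePre at *
  have e : (σ i * u)⁻¹ * (σ i * v) = u⁻¹ * v := by
    rw [mul_inv_rev, cs.inv_simple, mul_assoc, cs.simple_mul_simple_cancel_left]
  rw [e]
  rcases cs.length_simple_mul u i with hc | hc
  · omega
  · rcases cs.length_simple_mul v i with hc' | hc' <;> omega

/-- converse of `le_quot`. -/
lemma le_unquot_of_quot {i : B} {u v : W} (hu : ℓ (σ i * u) < ℓ u) (hv : ℓ (σ i * v) < ℓ v)
    (h : cs.lePre (σ i * u) (σ i * v)) : cs.lePre u v := by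
  unfold CoxeterSystem.lePre at *
  have e : (σ i * u)⁻¹ * (σ i * v) = u⁻¹ * v := by
    rw [mul_inv_rev, cs.inv_simple, mul_assoc, cs.simple_mul_simple_cancel_left]
  rw [e] at h
  rcases cs.length_simple_mul u i with hc | hc
  · omega
  · rcases cs.length_simple_mul v i with hc' | hc' <;> omega

/-- lift by a common non-descent. -/
lemma le_lift {i : B} {u v : W} (hu : ¬ ℓ (σ i * u) < ℓ u) (hv : ¬ ℓ (σ i * v) < ℓ v)
    (h : cs.lePre u v) : cs.lePre (σ i * u) (σ i * v) := by
  unfold CoxeterSystem.lePre at *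
  have e : (σ i * u)⁻¹ * (σ i * v) = u⁻¹ * v := by
    rw [mul_inv_rev, cs.inv_simple, mul_assoc, cs.simple_mul_simple_cancel_left]
  rw [e]
  rcases cs.length_simple_mul u i with hc | hc
  · rcases cs.length_simple_mul v i with hc' | hc' <;> omega
  · omega

/-- Wall lifting: if the wall of `t` is a wall of the chamber of `z` crossed on the way
from `1` to `z`, and `w ≤ z` is on the same side as `1`, then `w ≤ t*z`. -/
lemma wall_lift {t z w : W} (ht : cs.IsReflection t) (htz : ℓ (t * z) < ℓ z)
    (hwall : ℓ z ≤ ℓ (t * z) + 1) (hw : cs.lePre w z) (hnw : ¬ ℓ (t * w) < ℓ w) :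
    cs.lePre w (t * z) := by
  obtain ⟨ωw, hwred, hww⟩ := cs.exists_reduced_word' w
  obtain ⟨ωc, hcred, hcc⟩ := cs.exists_reduced_word' (w⁻¹ * z)
  have hπ : π (ωw ++ ωc) = z := by
    rw [cs.wordProd_append, ← hww, ← hcc]; group
  have hlz : ℓ w + ℓ (w⁻¹ * z) = ℓ z := hw
  have hred : cs.IsReduced (ωw ++ ωc) := by
    unfold CoxeterSystem.IsReduced at *
    rw [hπ, List.length_append, ← hwred, ← hcred, ← hww, ← hcc]
    omega
  have hlt : ℓ (t * π (ωw ++ ωc)) < ℓ (π (ωw ++ ωc)) := by rw [hπ]; exact htz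
  obtain ⟨j, hj, hget⟩ := se_left cs ht (ωw ++ ωc) hlt
  rcases Nat.lt_or_ge j ωw.length with hjw | hjw
  · -- the wall is crossed within w : contradiction
    exfalso
    have hfor : (cs.leftInvSeq (ωw ++ ωc)).getD j 1 = (cs.leftInvSeq ωw).getD j 1 := by
      rw [cs.getD_leftInvSeq, cs.getD_leftInvSeq,
        List.take_append_of_le_length (le_of_lt hjw), List.getElem?_append_left hjw]
    have hjl : j < (cs.leftInvSeq ωw).length := by
      rw [cs.length_leftInvSeq]; exact hjw
    have hmw : t ∈ cs.leftInvSeq ωw := by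
      rw [← hget, hfor, List.getD_eq_getElem _ _ hjl]
      exact List.getElem_mem _
    have hinv := cs.isLeftInversion_of_mem_leftInvSeq hwred hmw
    rw [← hww] at hinv
    exact hnw hinv.2
  · -- the wall is crossed within the complement
    have herase : t * z = π ((ωw ++ ωc).eraseIdx j) := by
      rw [← hπ, ← hget]
      exact cs.getD_leftInvSeq_mul_wordProd _ _
    rw [List.eraseIdx_append_of_length_le hjw, cs.wordProd_append] at herase
    have hX : w⁻¹ * (t * z) = π (ωc.eraseIdx (j - ωw.length)) := by
      rw [herase, ← hww, ← mul_assoc, inv_mul_cancel, one_mul]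
    have hklt : j - ωw.length < ωc.length := by
      rw [List.length_append] at hj; omega
    have hlen1 : (ωc.eraseIdx (j - ωw.length)).length + 1 = ωc.length :=
      List.length_eraseIdx_add_one hklt
    have hlenX : ℓ (w⁻¹ * (t * z)) + 1 ≤ ℓ (w⁻¹ * z) := by
      have h5 := cs.length_wordProd_le (ωc.eraseIdx (j - ωw.length))
      rw [← hX] at h5
      have h6 : ℓ (w⁻¹ * z) = ωc.length := by rw [hcc]; exact hcred.symm ▸ rfl
      omega
    have hup : ℓ (t * z) ≤ ℓ w + ℓ (w⁻¹ * (t * z)) := by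
      have e : t * z = w * (w⁻¹ * (t * z)) := by group
      nth_rw 1 [e]
      exact cs.length_mul_le _ _
    unfold CoxeterSystem.lePre
    omega

end CoxAux

namespace CoxAux
open CoxeterSystem List

attribute [local instance] Classical.propDecidable

variable {B W : Type*} [Group W] {M : CoxeterMatrix B} (cs : CoxeterSystem M W)

noncomputable local instance : DecidableEq W := Classical.decEq W

local prefix:100 "σ" => cs.simple
local prefix:100 "π" => cs.wordProd
local prefix:100 "ℓ" => cs.length

/-- `a` is represented by a reduced word in letters `i`, `j`. -/
def IsJW (i j : B) (a : W) : Prop :=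
  ∃ δ : List B, (∀ e ∈ δ, e = i ∨ e = j) ∧ π δ = a ∧ δ.length = ℓ a

lemma isJW_one (i j : B) : IsJW cs i j 1 :=
  ⟨[], by simp, by simp, by simp⟩

lemma isJW_of_word {i j : B} {a : W} (δ : List B) (hlet : ∀ e ∈ δ, e = i ∨ e = j)
    (hπ : π δ = a) : IsJW cs i j a := by
  obtain ⟨δ', hred, hπ', hmem⟩ := to_reduced cs δ
  exact ⟨δ', fun e he => hlet e (hmem e he), hπ'.trans hπ,
    by rw [← hπ'.trans hπ]; exact hred.symm⟩

lemma isJW_inv {i j : B} {a : W} (h : IsJW cs i j a) : IsJW cs i j a⁻¹ := by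
  obtain ⟨δ, hlet, hπ, _⟩ := h
  refine isJW_of_word cs δ.reverse (fun e he => hlet e (List.mem_reverse.mp he)) ?_
  rw [cs.wordProd_reverse, hπ]

lemma isJW_mul {i j : B} {a b : W} (ha : IsJW cs i j a) (hb : IsJW cs i j b) :
    IsJW cs i j (a * b) := by
  obtain ⟨δ, hlet, hπ, _⟩ := ha
  obtain ⟨δ', hlet', hπ', _⟩ := hb
  refine isJW_of_word cs (δ ++ δ') (fun e he => ?_) ?_
  · rcases List.mem_append.mp he with h | h
    · exact hlet e h
    · exact hlet' e h
  · rw [cs.wordProd_append, hπ, hπ']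

/-- Key parabolic lemma: if `σ i` and `σ j` are both left descents of `z`, then there is
a `J`-element `p ≤ z` having both as left descents. -/
lemma parabolic_lemma {i j : B} {z : W}
    (hi : ℓ (σ i * z) < ℓ z) (hj : ℓ (σ j * z) < ℓ z) :
    ∃ p : W, IsJW cs i j p ∧ ℓ (σ i * p) < ℓ p ∧ ℓ (σ j * p) < ℓ p ∧ cs.lePre p z := by
  -- Step 1: greedy decomposition z = π δ * c with c having no i/j descents
  have step1 : ∀ n (z : W), ℓ z ≤ n → ∃ (δ : List B) (c : W),
      (∀ e ∈ δ, e = i ∨ e = j) ∧ z = π δ * c ∧ ℓ z = δ.length + ℓ c ∧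
      ¬ ℓ (σ i * c) < ℓ c ∧ ¬ ℓ (σ j * c) < ℓ c := by
    intro n
    induction n with
    | zero =>
        intro z hz
        refine ⟨[], z, by simp, by simp, by simp, ?_, ?_⟩ <;> intro hlt <;> omega
    | succ n ih =>
        intro z hz
        by_cases hdi : ℓ (σ i * z) < ℓ z
        · obtain ⟨δ, c, h1, h2, h3, h4, h5⟩ := ih (σ i * z) (by omega)
          refine ⟨i :: δ, c, ?_, ?_, ?_, h4, h5⟩
          · intro e he
            rcases List.mem_cons.mp he with h | h
            · exact Or.inl h
            · exact h1 e h
          · rw [cs.wordProd_cons, mul_assoc, ← h2, cs.simple_mul_simple_cancel_left]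
          · have : ℓ z = ℓ (σ i * z) + 1 := by
              rcases cs.length_simple_mul z i with hc | hc <;> omega
            simp only [List.length_cons]
            omega
        · by_cases hdj : ℓ (σ j * z) < ℓ z
          · obtain ⟨δ, c, h1, h2, h3, h4, h5⟩ := ih (σ j * z) (by omega)
            refine ⟨j :: δ, c, ?_, ?_, ?_, h4, h5⟩
            · intro e he
              rcases List.mem_cons.mp he with h | h
              · exact Or.inr h
              · exact h1 e h
            · rw [cs.wordProd_cons, mul_assoc, ← h2, cs.simple_mul_simple_cancel_left]
            · have : ℓ z = ℓ (σ j * z) + 1 := by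
                rcases cs.length_simple_mul z j with hc | hc <;> omega
              simp only [List.length_cons]
              omega
          · exact ⟨[], z, by simp, by simp, by simp, hdi, hdj⟩
  obtain ⟨δ, c, hlet, hzc, hzlen, hci, hcj⟩ := step1 (ℓ z) z (le_refl _)
  -- Step 2: c is minimal in its W_J-coset
  have hmin : ∀ γ : List B, (∀ e ∈ γ, e = i ∨ e = j) → ℓ c ≤ ℓ (π γ * c) := by
    -- consider the minimal achievable length
    have hex : ∃ n, ∃ γ : List B, (∀ e ∈ γ, e = i ∨ e = j) ∧ ℓ (π γ * c) = n :=
      ⟨ℓ c, [], by simp, by simp⟩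
    have hspec := Nat.find_spec hex
    obtain ⟨γ₀, hγ₀let, hγ₀len⟩ := hspec
    set c₀ := π γ₀ * c with hc₀
    -- any W_J-reflection conjugate has length ≥ minimal, with odd difference
    have hrefl_min : ∀ (β : List B) (d : B), (∀ e ∈ β, e = i ∨ e = j) → (d = i ∨ d = j) →
        ¬ ℓ (((π β)⁻¹ * σ d * π β) * c₀) < ℓ c₀ := by
      intro β d hβ hd hlt
      set u := (π β)⁻¹ * σ d * π β with hu
      have hu_refl : cs.IsReflection u := isReflection_conj_left cs (cs.isReflection_simple d) (π β)
      -- u * c₀ is in the coset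
      have hγ : u * c₀ = π (β.reverse ++ [d] ++ β ++ γ₀) * c := by
        rw [cs.wordProd_append, cs.wordProd_append, cs.wordProd_append,
          cs.wordProd_reverse, cs.wordProd_singleton, hc₀, hu]
        group
      have hγlet : ∀ e ∈ (β.reverse ++ [d] ++ β ++ γ₀), e = i ∨ e = j := by
        intro e he
        rcases List.mem_append.mp he with h | h
        · rcases List.mem_append.mp h with h' | h'
          · rcases List.mem_append.mp h' with h'' | h''
            · exact hβ e (List.mem_reverse.mp h'')
            · rw [List.mem_singleton.mp h'']; exact hd
          · exact hβ e h'
        · exact hγ₀let e h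
      have hge : Nat.find hex ≤ ℓ (u * c₀) := by
        apply Nat.find_le
        exact ⟨_, hγlet, by rw [hγ]⟩
      omega
    -- if c₀ were shorter than c, then c would have a J-descent
    have hcc₀ : ℓ c = ℓ c₀ := by
      rcases Nat.lt_or_ge (Nat.find hex) (ℓ c) with hlt | hge
      · exfalso
        -- c = b * c₀ with b = (π γ₀)⁻¹ ≠ 1
        have hb : c = (π γ₀)⁻¹ * c₀ := by rw [hc₀]; group
        obtain ⟨β, hβred, hβπ, hβmem⟩ := to_reduced cs γ₀.reverse
        have hβπ' : π β = (π γ₀)⁻¹ := by rw [hβπ, cs.wordProd_reverse]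
        have hβlet : ∀ e ∈ β, e = i ∨ e = j := fun e he =>
          hγ₀let e (List.mem_reverse.mp (hβmem e he))
        have hβne : β ≠ [] := by
          intro hnil
          have h0 : π β = 1 := by rw [hnil]; exact cs.wordProd_nil
          rw [h0] at hβπ'
          have h1 : π γ₀ = 1 := by
            rw [← inv_inv (π γ₀), ← hβπ', inv_one]
          rw [hc₀] at hγ₀len
          rw [h1, one_mul] at hγ₀len
          omega
        obtain ⟨d, β', rfl⟩ : ∃ d β', β = d :: β' := by
          cases β with
          | nil => exact absurd rfl hβne
          | cons d β' => exact ⟨d, β', rfl⟩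
        -- σ d is then a descent of c
        have hd : d = i ∨ d = j := hβlet d List.mem_cons_self
        have hb_desc : ℓ (σ d * π (d :: β')) < ℓ (π (d :: β')) := by
          have e1 : π (d :: β') = σ d * π β' := cs.wordProd_cons d β'
          have h2 : ℓ (π (d :: β')) = (d :: β').length := hβred
          rw [e1, cs.simple_mul_simple_cancel_left]
          rw [e1] at h2
          have h1 := cs.length_wordProd_le β'
          simp only [List.length_cons] at h2
          omega
        have hsplit := (linv_mul_iff cs (cs.isReflection_simple d) (π (d :: β')) c₀).mpr
        have hconj : ¬ ℓ (((π (d :: β'))⁻¹ * σ d * π (d :: β')) * c₀) < ℓ c₀ :=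
          hrefl_min (d :: β') d hβlet hd
        have hdc : ℓ (σ d * ((π (d :: β')) * c₀)) < ℓ ((π (d :: β')) * c₀) :=
          hsplit (Or.inl ⟨hb_desc, hconj⟩)
        rw [hβπ', ← hb] at hdc
        rcases hd with rfl | rfl
        · exact hci hdc
        · exact hcj hdc
      · have h1 : Nat.find hex ≤ ℓ c := Nat.find_le ⟨[], by simp, by simp⟩
        omega
    intro γ hγ
    have h2 : Nat.find hex ≤ ℓ (π γ * c) := Nat.find_le ⟨γ, hγ, rfl⟩
    omega
  -- c itself has no W_J-reflection inversions
  have hno_inv : ∀ (β : List B) (d : B), (∀ e ∈ β, e = i ∨ e = j) → (d = i ∨ d = j) →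
      ¬ ℓ (((π β)⁻¹ * σ d * π β) * c) < ℓ c := by
    intro β d hβ hd hlt
    set u := (π β)⁻¹ * σ d * π β with hu
    have hu_refl : cs.IsReflection u := isReflection_conj_left cs (cs.isReflection_simple d) (π β)
    have hγ : u * c = π (β.reverse ++ [d] ++ β) * c := by
      rw [cs.wordProd_append, cs.wordProd_append, cs.wordProd_reverse, cs.wordProd_singleton, hu]
    have hγlet : ∀ e ∈ (β.reverse ++ [d] ++ β), e = i ∨ e = j := by
      intro e he
      rcases List.mem_append.mp he with h | h
      · rcases List.mem_append.mp h with h' | h'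
        · exact hβ e (List.mem_reverse.mp h')
        · rw [List.mem_singleton.mp h']; exact hd
      · exact hβ e h
    have hge := hmin _ hγlet
    rw [← hγ] at hge
    omega
  -- Step 3: a := π δ has both descents
  set a := π δ with ha
  have halen : ℓ a = δ.length := by
    have h1 := cs.length_wordProd_le δ
    rw [← ha] at h1
    have h2 : ℓ z ≤ ℓ a + ℓ c := by
      rw [hzc]; exact cs.length_mul_le _ _
    omega
  have hdesc : ∀ d : B, (d = i ∨ d = j) → ℓ (σ d * z) < ℓ z → ℓ (σ d * a) < ℓ a := by
    intro d hd hdz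
    rw [hzc] at hdz
    rcases (linv_mul_iff cs (cs.isReflection_simple d) a c).mp hdz with ⟨h1, _⟩ | ⟨_, h2⟩
    · exact h1
    · exact absurd h2 (hno_inv δ d hlet hd)
  refine ⟨a, isJW_of_word cs δ hlet rfl, hdesc i (Or.inl rfl) hi, hdesc j (Or.inr rfl) hj, ?_⟩
  unfold CoxeterSystem.lePre
  have : a⁻¹ * z = c := by rw [hzc]; group
  rw [this]
  omega

/-- The both-descent `J`-element dominates every `J`-element in the prefix order. -/
lemma jw_max {i j : B} {p : W} (hp : IsJW cs i j p)
    (hpi : ℓ (σ i * p) < ℓ p) (hpj : ℓ (σ j * p) < ℓ p) :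
    ∀ n (b : W), ℓ b ≤ n → IsJW cs i j b → cs.lePre b p := by
  intro n
  induction n with
  | zero =>
      intro b hb hbjw
      have : b = 1 := cs.length_eq_zero_iff.mp (by omega)
      rw [this]
      exact one_le cs p
  | succ n ih =>
      intro b hb hbjw
      obtain ⟨δ, hlet, hπ, hlen⟩ := hbjw
      cases δ with
      | nil =>
          have : b = 1 := by rw [← hπ]; simp
          rw [this]; exact one_le cs p
      | cons d δ' =>
          have hd : d = i ∨ d = j := hlet d List.mem_cons_self
          have hb' : π δ' = σ d * b := by
            rw [← hπ, cs.wordProd_cons, cs.simple_mul_simple_cancel_left]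
          have hred' : δ'.length = ℓ (π δ') := by
            have h1 := cs.length_wordProd_le δ'
            simp only [List.length_cons] at hlen
            -- δ' is reduced : ℓ b = δ'.length + 1 and π δ' = σ d * b
            have h2 : ℓ b ≤ ℓ (π δ') + 1 := by
              have : b = σ d * π δ' := by rw [hb', cs.simple_mul_simple_cancel_left]
              rw [this]
              rcases cs.length_simple_mul (π δ') d with hc | hc <;> omega
            omega
          have hjw' : IsJW cs i j (σ d * b) :=
            ⟨δ', fun e he => hlet e (List.mem_cons_of_mem d he), hb', by rw [hb'] at hred'; exact hred'⟩
          have hdb : ℓ (σ d * b) < ℓ b := by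
            rw [← hb', ← hπ]
            have h1 := cs.length_wordProd_le δ'
            rw [← hπ] at hlen
            rw [← hred'] at *
            simp only [List.length_cons] at hlen
            omega
          have hIH : cs.lePre (σ d * b) p := ih (σ d * b) (by omega) hjw'
          have hdp : ℓ (σ d * p) < ℓ p := by rcases hd with rfl | rfl <;> assumption
          -- lift : σ d * b ≤ σ d * p  since  σ d is not a descent of σ d * b
          have hnd : ¬ ℓ (σ d * (σ d * b)) < ℓ (σ d * b) := by
            rw [cs.simple_mul_simple_cancel_left]
            omega
          have h2 : cs.lePre (σ d * b) (σ d * p) :=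
            wall_lift cs (cs.isReflection_simple d) hdp
              (by rcases cs.length_simple_mul p d with hc | hc <;> omega) hIH hnd
          exact le_unquot_of_quot cs hdb hdp h2
  
/-- Uniqueness of the both-descent `J`-element. -/
lemma jw_unique {i j : B} {p q : W} (hp : IsJW cs i j p)
    (hpi : ℓ (σ i * p) < ℓ p) (hpj : ℓ (σ j * p) < ℓ p)
    (hq : IsJW cs i j q) (hqi : ℓ (σ i * q) < ℓ q) (hqj : ℓ (σ j * q) < ℓ q) :
    p = q :=
  le_antisymm' cs (jw_max cs hq hqi hqj (ℓ p) p (le_refl _) hp)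
    (jw_max cs hp hpi hpj (ℓ q) q (le_refl _) hq)

end CoxAux

namespace CoxAux
open CoxeterSystem List

attribute [local instance] Classical.propDecidable

variable {B W : Type*} [Group W] {M : CoxeterMatrix B} (cs : CoxeterSystem M W)

noncomputable local instance : DecidableEq W := Classical.decEq W

local prefix:100 "σ" => cs.simple
local prefix:100 "π" => cs.wordProd
local prefix:100 "ℓ" => cs.length

/-- maximality transfers to the quotient by a common descent. -/
lemma quot_max_aux {d : B} {x y m : W}
    (hdx : ℓ (σ d * x) < ℓ x) (hdy : ℓ (σ d * y) < ℓ y) (hdm : ℓ (σ d * m) < ℓ m)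
    (hmx : cs.lePre m x) (hmy : cs.lePre m y)
    (hmax : ∀ w, cs.lePre w x → cs.lePre w y → ℓ w ≤ ℓ m) :
    cs.lePre (σ d * m) (σ d * x) ∧ cs.lePre (σ d * m) (σ d * y) ∧
      (∀ w', cs.lePre w' (σ d * x) → cs.lePre w' (σ d * y) → ℓ w' ≤ ℓ (σ d * m)) := by
  refine ⟨le_quot cs hdm hdx hmx, le_quot cs hdm hdy hmy, ?_⟩
  intro w' hw'x hw'y
  have hndx : ¬ ℓ (σ d * (σ d * x)) < ℓ (σ d * x) := by
    rw [cs.simple_mul_simple_cancel_left]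
    omega
  have hndy : ¬ ℓ (σ d * (σ d * y)) < ℓ (σ d * y) := by
    rw [cs.simple_mul_simple_cancel_left]
    omega
  have hndw : ¬ ℓ (σ d * w') < ℓ w' := fun h => hndx (linv_mono cs hw'x h)
  have h1 : cs.lePre (σ d * w') x := by
    have := le_lift cs hndw hndx hw'x
    rwa [cs.simple_mul_simple_cancel_left] at this
  have h2 : cs.lePre (σ d * w') y := by
    have := le_lift cs hndw hndy hw'y
    rwa [cs.simple_mul_simple_cancel_left] at this
  have h3 : ℓ (σ d * w') ≤ ℓ m := hmax _ h1 h2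
  have h4 : ℓ (σ d * w') = ℓ w' + 1 := by
    rcases cs.length_simple_mul w' d with hc | hc <;> omega
  have h5 : ℓ (σ d * m) + 1 = ℓ m := by
    rcases cs.length_simple_mul m d with hc | hc <;> omega
  omega

/-- A maximal-length common prefix is the greatest common prefix. -/
lemma meet_max : ∀ n : ℕ, ∀ x y m : W, ℓ x + ℓ y ≤ n →
    cs.lePre m x → cs.lePre m y →
    (∀ w, cs.lePre w x → cs.lePre w y → ℓ w ≤ ℓ m) →
    ∀ w, cs.lePre w x → cs.lePre w y → cs.lePre w m := by
  intro n
  induction n using Nat.strong_induction_on with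
  | _ n ih =>
    intro x y m hn hmx hmy hmax w hwx hwy
    by_cases hw1 : w = 1
    · rw [hw1]; exact one_le cs m
    obtain ⟨d₁, hd₁w⟩ := cs.exists_leftDescent_of_ne_one hw1
    have hd₁w' : ℓ (σ d₁ * w) < ℓ w := hd₁w
    have hd₁x : ℓ (σ d₁ * x) < ℓ x := linv_mono cs hwx hd₁w'
    have hd₁y : ℓ (σ d₁ * y) < ℓ y := linv_mono cs hwy hd₁w'
    have key : ℓ (σ d₁ * m) < ℓ m := by
      by_contra hd₁m
      have hm1 : m ≠ 1 := by
        intro h1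
        have h2 := hmax w hwx hwy
        rw [h1, cs.length_one] at h2
        exact hw1 (cs.length_eq_zero_iff.mp (by omega))
      obtain ⟨d₀, hd₀m⟩ := cs.exists_leftDescent_of_ne_one hm1
      have hd₀m' : ℓ (σ d₀ * m) < ℓ m := hd₀m
      have hd₀x : ℓ (σ d₀ * x) < ℓ x := linv_mono cs hmx hd₀m'
      have hd₀y : ℓ (σ d₀ * y) < ℓ y := linv_mono cs hmy hd₀m'
      obtain ⟨p, hpjw, hpd₀, hpd₁, hpx⟩ := parabolic_lemma cs hd₀x hd₁x
      obtain ⟨q, hqjw, hqd₀, hqd₁, hqy⟩ := parabolic_lemma cs hd₀y hd₁y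
      have hpq : p = q := jw_unique cs hpjw hpd₀ hpd₁ hqjw hqd₀ hqd₁
      rw [← hpq] at hqy
      obtain ⟨hq1, hq2, hq3⟩ := quot_max_aux cs hd₀x hd₀y hd₀m' hmx hmy hmax
      have hmeas : ℓ (σ d₀ * x) + ℓ (σ d₀ * y) < n := by
        have e1 : ℓ (σ d₀ * x) + 1 = ℓ x := by
          rcases cs.length_simple_mul x d₀ with hc | hc <;> omega
        have e2 : ℓ (σ d₀ * y) + 1 = ℓ y := by
          rcases cs.length_simple_mul y d₀ with hc | hc <;> omega
        omega
      have hp_quot_x : cs.lePre (σ d₀ * p) (σ d₀ * x) := le_quot cs hpd₀ hd₀x hpx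
      have hp_quot_y : cs.lePre (σ d₀ * p) (σ d₀ * y) := le_quot cs hpd₀ hd₀y hqy
      have h5 : cs.lePre (σ d₀ * p) (σ d₀ * m) :=
        ih _ hmeas (σ d₀ * x) (σ d₀ * y) (σ d₀ * m) (le_refl _) hq1 hq2 hq3
          (σ d₀ * p) hp_quot_x hp_quot_y
      have h6 : cs.lePre p m := le_unquot_of_quot cs hpd₀ hd₀m' h5
      exact hd₁m (linv_mono cs h6 hpd₁)
    -- now both w and m have the descent d₁
    obtain ⟨hq1, hq2, hq3⟩ := quot_max_aux cs hd₁x hd₁y key hmx hmy hmax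
    have hmeas : ℓ (σ d₁ * x) + ℓ (σ d₁ * y) < n := by
      have e1 : ℓ (σ d₁ * x) + 1 = ℓ x := by
        rcases cs.length_simple_mul x d₁ with hc | hc <;> omega
      have e2 : ℓ (σ d₁ * y) + 1 = ℓ y := by
        rcases cs.length_simple_mul y d₁ with hc | hc <;> omega
      omega
    have hw_quot_x : cs.lePre (σ d₁ * w) (σ d₁ * x) := le_quot cs hd₁w' hd₁x hwx
    have hw_quot_y : cs.lePre (σ d₁ * w) (σ d₁ * y) := le_quot cs hd₁w' hd₁y hwy
    have h5 : cs.lePre (σ d₁ * w) (σ d₁ * m) :=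
      ih _ hmeas (σ d₁ * x) (σ d₁ * y) (σ d₁ * m) (le_refl _) hq1 hq2 hq3
        (σ d₁ * w) hw_quot_x hw_quot_y
    exact le_unquot_of_quot cs hd₁w' key h5

/-- Existence of greatest common prefixes. -/
lemma meet_exists (x y : W) :
    ∃ m : W, cs.lePre m x ∧ cs.lePre m y ∧
      ∀ w, cs.lePre w x → cs.lePre w y → cs.lePre w m := by
  set P : ℕ → Prop := fun k => ∃ m : W, cs.lePre m x ∧ cs.lePre m y ∧ ℓ m = k with hP
  have hP0 : P 0 := ⟨1, one_le cs x, one_le cs y, cs.length_one⟩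
  have hfg : P (Nat.findGreatest P (ℓ x)) :=
    Nat.findGreatest_spec (Nat.zero_le _) hP0
  obtain ⟨m, hmx, hmy, hmlen⟩ := hfg
  refine ⟨m, hmx, hmy, ?_⟩
  have hmax : ∀ w, cs.lePre w x → cs.lePre w y → ℓ w ≤ ℓ m := by
    intro w hwx hwy
    by_contra hlt
    push_neg at hlt
    have h1 : ℓ w ≤ ℓ x := le_length cs hwx
    have h2 : ¬ P (ℓ w) :=
      Nat.findGreatest_is_greatest (by omega) h1
    exact h2 ⟨w, hwx, hwy, rfl⟩
  exact meet_max cs (ℓ x + ℓ y) x y m (le_refl _) hmx hmy hmax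

end CoxAux


theorem unique_maximal_prefix_off_wall {B : Type*} {W : Type*} [Group W]
    {M : CoxeterMatrix B} (cs : CoxeterSystem M W)
    (w₁ t : W) (ht : cs.IsReflection t)
    (hexists : ∃ w₂ : W, cs.lePre w₁ w₂ ∧ cs.IsLeftInversion w₂ t ∧
      ∃ i : B, t = w₂ * cs.simple i * w₂⁻¹) :
    ∃! m : W,
      (¬ cs.length (t * m) < cs.length m ∧ cs.lePre m w₁) ∧
      ∀ w : W, (¬ cs.length (t * w) < cs.length w ∧ cs.lePre w w₁) → cs.lePre w m := by
  obtain ⟨w₂, h12, ⟨_, htw₂⟩, i, hti⟩ := hexists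
  set v := t * w₂ with hv
  have hvs : v = w₂ * cs.simple i := by
    rw [hv, hti]
    group
  have htw₂' : cs.length v < cs.length w₂ := by rw [hv]; exact htw₂
  have hwall : cs.length w₂ ≤ cs.length v + 1 := by
    rw [hvs]
    rcases cs.length_mul_simple w₂ i with hc | hc <;> omega
  have htv : ¬ cs.length (t * v) < cs.length v := by
    have e : t * v = w₂ := by rw [hv, ← mul_assoc, ht.mul_self, one_mul]
    rw [e]
    omega
  -- the set in question equals the set of common prefixes of w₁ and v
  have hMiff : ∀ w : W, (¬ cs.length (t * w) < cs.length w ∧ cs.lePre w w₁) ↔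
      (cs.lePre w w₁ ∧ cs.lePre w v) := by
    intro w
    constructor
    · rintro ⟨hnw, hw1⟩
      refine ⟨hw1, ?_⟩
      exact CoxAux.wall_lift cs ht htw₂ hwall (CoxAux.le_trans' cs hw1 h12) hnw
    · rintro ⟨hw1, hwv⟩
      refine ⟨fun hlt => htv (CoxAux.linv_mono cs hwv hlt), hw1⟩
  obtain ⟨m, hm1, hm2, hmax⟩ := CoxAux.meet_exists cs w₁ v
  refine ⟨m, ⟨(hMiff m).mpr ⟨hm1, hm2⟩, ?_⟩, ?_⟩
  · intro w hw
    obtain ⟨hw1, hwv⟩ := (hMiff w).mp hw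
    exact hmax w hw1 hwv
  · rintro m' ⟨hm'P, hm'max⟩
    have h1 : cs.lePre m' m := by
      obtain ⟨h1, h2⟩ := (hMiff m').mp hm'P
      exact hmax m' h1 h2
    have h2 : cs.lePre m m' := hm'max m ((hMiff m).mpr ⟨hm1, hm2⟩)
    exact CoxAux.le_antisymm' cs h1 h2
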